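/- Let G ≠ Kₙ be a simple graph on n vertices with m ≥ 1 edges, and let k ≥ 2. If m ≥ n²/4, then ||LI(G)||_{F_k} ≤ 2m/n + (k−1)·spr(L(G)), where spr(L(G)) = μ₁(G) − μₙ₋₁(G) is the Laplacian spread of G. -/

import Mathlib

open Finset SimpleGraph

attribute [local instance] Classical.propDecidable

/-- The `i`-th largest value of the tuple `f` (values sorted in non-increasing order). -/
noncomputable def sortDesc {n : ℕ} (f : Fin n → ℝ) : Fin n → ℝ :=
  fun i => f (Tuple.sort f i.rev)

/-- The Laplacian eigenvalues of `G`, in non-increasing order: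
`lapEig G 0 = μ₁ ≥ lapEig G 1 = μ₂ ≥ ⋯`. -/
noncomputable def lapEig {n : ℕ} (G : SimpleGraph (Fin n)) : Fin n → ℝ :=
  sortDesc (SimpleGraph.posSemidef_lapMatrix ℝ G).isHermitian.eigenvalues

/-- The number of edges of `G`. -/
noncomputable def numEdges {n : ℕ} (G : SimpleGraph (Fin n)) : ℕ :=
  G.edgeFinset.card

/-- The singular values of the LI-matrix `LI(G) = L(G) - (2m/n)·Iₙ`, in non-increasing
order; they are the values `|μᵢ - 2m/n|` sorted non-increasingly. -/
noncomputable def LIsv {n : ℕ} (G : SimpleGraph (Fin n)) : Fin n → ℝ :=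
  sortDesc (fun i => |lapEig G i - 2 * numEdges G / n|)

/-- The Ky Fan `k`-norm of the LI-matrix of `G`: the sum of the `k` largest singular
values of `LI(G)`. -/
noncomputable def kyFanLI {n : ℕ} (G : SimpleGraph (Fin n)) (k : ℕ) : ℝ :=
  ∑ i ∈ Finset.univ.filter (fun i : Fin n => (i : ℕ) < k), LIsv G i

/-- `S_k(L(G))`, the sum of the `k` largest Laplacian eigenvalues of `G`. -/
noncomputable def lapSum {n : ℕ} (G : SimpleGraph (Fin n)) (k : ℕ) : ℝ :=
  ∑ i ∈ Finset.univ.filter (fun i : Fin n => (i : ℕ) < k), lapEig G i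

section Auxiliary

open Matrix

variable {n : ℕ}

/-! ### Spectral toolkit for real symmetric matrices -/

/-- Coordinates of a vector in the orthonormal eigenbasis. -/
noncomputable def auxCoord {A : Matrix (Fin n) (Fin n) ℝ} (hA : A.IsHermitian)
    (x : Fin n → ℝ) : Fin n → ℝ :=
  (star (hA.eigenvectorUnitary : Matrix (Fin n) (Fin n) ℝ)) *ᵥ x

lemma aux_star_eq_tr {A : Matrix (Fin n) (Fin n) ℝ} (hA : A.IsHermitian) :
    star (hA.eigenvectorUnitary : Matrix (Fin n) (Fin n) ℝ)
    = (hA.eigenvectorUnitary : Matrix (Fin n) (Fin n) ℝ)ᵀ := by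
  rw [Matrix.star_eq_conjTranspose, conjTranspose_eq_transpose_of_trivial]

lemma aux_UUt {A : Matrix (Fin n) (Fin n) ℝ} (hA : A.IsHermitian) :
    (hA.eigenvectorUnitary : Matrix (Fin n) (Fin n) ℝ) *
    (hA.eigenvectorUnitary : Matrix (Fin n) (Fin n) ℝ)ᵀ = 1 := by
  rw [← aux_star_eq_tr]
  exact (Matrix.mem_unitaryGroup_iff).mp (hA.eigenvectorUnitary).2

lemma aux_UtU {A : Matrix (Fin n) (Fin n) ℝ} (hA : A.IsHermitian) :
    (hA.eigenvectorUnitary : Matrix (Fin n) (Fin n) ℝ)ᵀ *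
    (hA.eigenvectorUnitary : Matrix (Fin n) (Fin n) ℝ) = 1 := by
  rw [← aux_star_eq_tr]
  exact (Matrix.mem_unitaryGroup_iff').mp (hA.eigenvectorUnitary).2

lemma aux_spec_diag {A : Matrix (Fin n) (Fin n) ℝ} (hA : A.IsHermitian) :
    A = (hA.eigenvectorUnitary : Matrix (Fin n) (Fin n) ℝ) *
    diagonal hA.eigenvalues * star (hA.eigenvectorUnitary : Matrix (Fin n) (Fin n) ℝ) := by
  have := hA.spectral_theorem
  simpa [RCLike.ofReal_real_eq_id] using this

lemma aux_coord_dot {A : Matrix (Fin n) (Fin n) ℝ} (hA : A.IsHermitian) (x y : Fin n → ℝ) :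
    auxCoord hA x ⬝ᵥ auxCoord hA y = x ⬝ᵥ y := by
  unfold auxCoord
  rw [aux_star_eq_tr, dotProduct_mulVec, vecMul_transpose, mulVec_mulVec, aux_UUt, one_mulVec]

lemma aux_coord_recover {A : Matrix (Fin n) (Fin n) ℝ} (hA : A.IsHermitian) (x : Fin n → ℝ) :
    (hA.eigenvectorUnitary : Matrix (Fin n) (Fin n) ℝ) *ᵥ auxCoord hA x = x := by
  unfold auxCoord
  rw [aux_star_eq_tr, mulVec_mulVec, aux_UUt, one_mulVec]

lemma aux_quad_eq {A : Matrix (Fin n) (Fin n) ℝ} (hA : A.IsHermitian) (x : Fin n → ℝ) :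
    x ⬝ᵥ A *ᵥ x = ∑ i, hA.eigenvalues i * (auxCoord hA x i)^2 := by
  conv_lhs => rw [aux_spec_diag hA]
  rw [aux_star_eq_tr, ← mulVec_mulVec, ← mulVec_mulVec, dotProduct_mulVec, ← mulVec_transpose]
  show auxCoord hA x ⬝ᵥ (diagonal hA.eigenvalues *ᵥ auxCoord hA x) = _
  simp [dotProduct, mulVec_diagonal]
  congr 1; ext i; ring

lemma aux_trace_eq {A : Matrix (Fin n) (Fin n) ℝ} (hA : A.IsHermitian) :
    ∑ i, hA.eigenvalues i = A.trace := by
  conv_rhs => rw [aux_spec_diag hA]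
  rw [trace_mul_comm, ← mul_assoc, aux_star_eq_tr, aux_UtU, one_mul]
  simp [trace_diagonal]

lemma aux_rayleigh_second {A : Matrix (Fin n) (Fin n) ℝ} (hA : A.IsHermitian)
    (hpsd : ∀ i, 0 ≤ hA.eigenvalues i) (μ : ℝ)
    (hcard : (Finset.univ.filter fun i => hA.eigenvalues i < μ).card ≤ 1)
    (z x : Fin n → ℝ) (hz : A *ᵥ z = 0) (hz0 : z ≠ 0) (hzx : z ⬝ᵥ x = 0) :
    μ * (x ⬝ᵥ x) ≤ x ⬝ᵥ A *ᵥ x := by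
  classical
  have hxq : x ⬝ᵥ A *ᵥ x = ∑ i, hA.eigenvalues i * (auxCoord hA x i)^2 := aux_quad_eq hA x
  have hxx : x ⬝ᵥ x = ∑ i, (auxCoord hA x i)^2 := by
    rw [← aux_coord_dot hA x x]; simp [dotProduct, pow_two]
  by_cases hμ : μ ≤ 0
  · have h1 : μ * (x ⬝ᵥ x) ≤ 0 := by
      apply mul_nonpos_of_nonpos_of_nonneg hμ
      rw [hxx]; positivity
    have h2 : (0:ℝ) ≤ x ⬝ᵥ A *ᵥ x := by
      rw [hxq]; apply Finset.sum_nonneg; intro i _; exact mul_nonneg (hpsd i) (sq_nonneg _)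
    linarith
  push_neg at hμ
  set d := auxCoord hA z with hd
  have hzero : ∀ i, hA.eigenvalues i * (d i)^2 = 0 := by
    have h0 : ∑ i, hA.eigenvalues i * (d i)^2 = 0 := by
      rw [← aux_quad_eq hA z, hz, dotProduct_zero]
    intro i
    have := (Finset.sum_eq_zero_iff_of_nonneg
      (by intro j _; exact mul_nonneg (hpsd j) (sq_nonneg _))).mp h0
    exact this i (Finset.mem_univ i)
  have hdne : d ≠ 0 := by
    intro hc
    apply hz0
    rw [← aux_coord_recover hA z, ← hd, hc, mulVec_zero]
  obtain ⟨i₀, hi₀⟩ : ∃ i, d i ≠ 0 := by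
    by_contra hc; push_neg at hc; exact hdne (funext hc)
  have hEi₀ : hA.eigenvalues i₀ = 0 := by
    have := hzero i₀
    rcases mul_eq_zero.mp this with h | h
    · exact h
    · exact absurd (pow_eq_zero_iff (by norm_num) |>.mp h) hi₀
  have hmem : i₀ ∈ Finset.univ.filter fun i => hA.eigenvalues i < μ := by
    simp [hEi₀, hμ]
  have hsub : (Finset.univ.filter fun i => hA.eigenvalues i < μ) = {i₀} := by
    apply Finset.eq_singleton_iff_unique_mem.mpr
    refine ⟨hmem, fun j hj => ?_⟩
    by_contra hne
    have : 2 ≤ (Finset.univ.filter fun i => hA.eigenvalues i < μ).card := by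
      have hss : ({j, i₀} : Finset (Fin n)) ⊆
          (Finset.univ.filter fun i => hA.eigenvalues i < μ) := by
        intro t ht
        simp at ht
        rcases ht with rfl | rfl
        · exact hj
        · exact hmem
      calc 2 = ({j, i₀} : Finset (Fin n)).card := by
            rw [Finset.card_insert_of_notMem (by simpa), Finset.card_singleton]
      _ ≤ _ := Finset.card_le_card hss
    omega
  have hge : ∀ i, i ≠ i₀ → μ ≤ hA.eigenvalues i := by
    intro i hne
    by_contra hc
    push_neg at hc
    have : i ∈ (Finset.univ.filter fun i => hA.eigenvalues i < μ) := by simp [hc]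
    rw [hsub] at this
    exact hne (Finset.mem_singleton.mp this)
  have hci₀ : auxCoord hA x i₀ = 0 := by
    have hdc : ∑ i, d i * auxCoord hA x i = 0 := by
      have := aux_coord_dot hA z x
      rw [hzx] at this
      simpa [dotProduct] using this
    have honly : ∀ i ∈ Finset.univ, i ≠ i₀ → d i * auxCoord hA x i = 0 := by
      intro i _ hne
      have hdi : d i = 0 := by
        by_contra hdi
        have hEi : hA.eigenvalues i = 0 := by
          rcases mul_eq_zero.mp (hzero i) with h | h
          · exact h
          · exact absurd (pow_eq_zero_iff (by norm_num) |>.mp h) hdi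
        have := hge i hne
        rw [hEi] at this
        linarith
      rw [hdi, zero_mul]
    have := Finset.sum_eq_single_of_mem i₀ (Finset.mem_univ i₀) honly
    rw [this] at hdc
    exact (mul_eq_zero.mp hdc).resolve_left hi₀
  rw [hxq, hxx, Finset.mul_sum]
  apply Finset.sum_le_sum
  intro i _
  by_cases hi : i = i₀
  · subst hi; rw [hci₀]; simp
  · have := hge i hi
    nlinarith [sq_nonneg (auxCoord hA x i)]

lemma aux_eig_le_of_quad {A : Matrix (Fin n) (Fin n) ℝ} (hA : A.IsHermitian) (C : ℝ)
    (hq : ∀ x, x ⬝ᵥ A *ᵥ x ≤ C * (x ⬝ᵥ x)) (i : Fin n) : hA.eigenvalues i ≤ C := by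
  set x : Fin n → ℝ := ⇑(hA.eigenvectorBasis i) with hxdef
  have hx : A *ᵥ x = hA.eigenvalues i • x := hA.mulVec_eigenvectorBasis i
  have hnorm : ‖hA.eigenvectorBasis i‖ = 1 := hA.eigenvectorBasis.orthonormal.1 i
  have hxx : x ⬝ᵥ x = 1 := by
    have h2 : Real.sqrt (∑ j, ‖(hA.eigenvectorBasis i) j‖^2) = 1 := by
      rw [← EuclideanSpace.norm_eq]; exact hnorm
    have h3 : (∑ j, ‖(hA.eigenvectorBasis i) j‖^2) = 1 := by
      have hnn : (0:ℝ) ≤ ∑ j, ‖(hA.eigenvectorBasis i) j‖^2 := by positivity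
      nlinarith [Real.sq_sqrt hnn]
    rw [dotProduct, ← h3]
    apply Finset.sum_congr rfl
    intro j _
    rw [Real.norm_eq_abs, sq_abs, pow_two]
  have := hq x
  rw [hx, dotProduct_smul, smul_eq_mul, hxx] at this
  simpa using this

/-! ### Laplacian quadratic form facts -/

lemma aux_lap_quad_le (G : SimpleGraph (Fin n)) [DecidableRel G.Adj] (x : Fin n → ℝ) :
    x ⬝ᵥ (G.lapMatrix ℝ) *ᵥ x ≤ (n:ℝ) * (x ⬝ᵥ x) := by
  classical
  have h := G.lapMatrix_toLinearMap₂' (R := ℝ) x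
  rw [Matrix.toLinearMap₂'_apply'] at h
  rw [h]
  have hb : (∑ i, ∑ j, if G.Adj i j then (x i - x j)^2 else 0) ≤ ∑ i, ∑ j, (x i - x j)^2 := by
    apply Finset.sum_le_sum; intro i _
    apply Finset.sum_le_sum; intro j _
    split_ifs with hij
    · exact le_rfl
    · positivity
  have hexp : ∑ i, ∑ j, (x i - x j)^2 = 2*(n:ℝ)*(∑ i, x i^2) - 2*(∑ i, x i)^2 := by
    have key : ∀ i j : Fin n, (x i - x j)^2 = x i^2 + x j^2 - 2*(x i * x j) := fun i j => by ring
    calc ∑ i, ∑ j, (x i - x j)^2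
        = ∑ i : Fin n, ((n:ℝ) * x i^2 + (∑ j, x j^2) - 2*(x i * ∑ j, x j)) := by
          apply Finset.sum_congr rfl; intro i _
          rw [Finset.sum_congr rfl fun j _ => key i j, Finset.sum_sub_distrib,
            Finset.sum_add_distrib, Finset.sum_const, Finset.card_univ, Fintype.card_fin,
            nsmul_eq_mul, ← Finset.mul_sum, ← Finset.mul_sum]
      _ = ((n:ℝ) * ∑ i, x i^2) + ((n:ℝ) * ∑ j, x j^2) - 2*((∑ i, x i) * (∑ j, x j)) := by
          rw [Finset.sum_sub_distrib, Finset.sum_add_distrib, ← Finset.mul_sum,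
            Finset.sum_const, Finset.card_univ, Fintype.card_fin, nsmul_eq_mul]
          have h2 : ∑ i, 2*(x i * ∑ j, x j) = 2*((∑ i, x i) * (∑ j, x j)) := by
            rw [← Finset.mul_sum, ← Finset.sum_mul]
          rw [h2]
      _ = 2*(n:ℝ)*(∑ i, x i^2) - 2*(∑ i, x i)^2 := by ring
  have hdx : x ⬝ᵥ x = ∑ i, x i^2 := by
    rw [dotProduct]; exact Finset.sum_congr rfl fun i _ => (pow_two (x i)).symm
  rw [hdx]
  nlinarith [sq_nonneg (∑ i, x i), hb, hexp]

lemma aux_lap_trace (G : SimpleGraph (Fin n)) [DecidableRel G.Adj] :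
    (G.lapMatrix ℝ).trace = 2 * (G.edgeFinset.card : ℝ) := by
  classical
  have h1 : (G.lapMatrix ℝ).trace = ∑ i, ((G.degree i : ℝ)) := by
    rw [Matrix.trace]
    apply Finset.sum_congr rfl
    intro i _
    simp [Matrix.diag, lapMatrix, degMatrix, Matrix.diagonal]
  rw [h1]
  have h := SimpleGraph.sum_degrees_eq_twice_card_edges G
  exact_mod_cast congrArg (Nat.cast : ℕ → ℝ) h

lemma aux_lap_quad_pair (G : SimpleGraph (Fin n)) [DecidableRel G.Adj] {u v : Fin n}
    (hne : u ≠ v) (hnadj : ¬G.Adj u v) :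
    ((fun i => (if i = u then (1:ℝ) else 0) - (if i = v then 1 else 0)) ⬝ᵥ
      (G.lapMatrix ℝ) *ᵥ (fun i => (if i = u then (1:ℝ) else 0) - (if i = v then 1 else 0)))
    = (G.degree u : ℝ) + G.degree v := by
  classical
  set x : Fin n → ℝ := fun i => (if i = u then (1:ℝ) else 0) - (if i = v then 1 else 0) with hx
  set w : Fin n → ℝ := (G.lapMatrix ℝ) *ᵥ x with hw
  have hsum : ∀ (S : Finset (Fin n)), (u ∉ S) → (v ∉ S) → ∑ t ∈ S, x t = 0 := by
    intro S hu hv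
    apply Finset.sum_eq_zero
    intro t ht
    rw [hx]
    dsimp only
    rw [if_neg (fun h : t = u => hu (by rw [← h]; exact ht)),
      if_neg (fun h : t = v => hv (by rw [← h]; exact ht)), sub_zero]
  have hwu : w u = G.degree u := by
    rw [hw, lapMatrix_mulVec_apply]
    have hxu : x u = 1 := by rw [hx]; simp [hne]
    rw [hxu, hsum (G.neighborFinset u) (by simp) (by simp [hnadj]), mul_one, sub_zero]
  have hwv : w v = -(G.degree v) := by
    rw [hw, lapMatrix_mulVec_apply]
    have hxv : x v = -1 := by rw [hx]; simp [Ne.symm hne]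
    rw [hxv, hsum (G.neighborFinset v) (by simp; exact fun h => hnadj h.symm) (by simp),
      sub_zero]
    ring
  have hdot : x ⬝ᵥ w = w u - w v := by
    rw [dotProduct]
    have key : ∀ i, x i * w i = (if i = u then w i else 0) - (if i = v then w i else 0) := by
      intro i
      rw [hx]
      dsimp only
      split_ifs <;> ring
    rw [Finset.sum_congr rfl fun i _ => key i, Finset.sum_sub_distrib,
      Finset.sum_ite_eq' Finset.univ u w, Finset.sum_ite_eq' Finset.univ v w,
      if_pos (Finset.mem_univ u), if_pos (Finset.mem_univ v)]
  rw [hdot, hwu, hwv]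
  ring

lemma aux_ones_dot_pair {u v : Fin n} (hne : u ≠ v) :
    (fun _ : Fin n => (1:ℝ)) ⬝ᵥ
      (fun i => (if i = u then (1:ℝ) else 0) - (if i = v then 1 else 0)) = 0 := by
  classical
  rw [dotProduct]
  simp only [one_mul]
  rw [Finset.sum_sub_distrib, Finset.sum_ite_eq' Finset.univ u (fun _ => (1:ℝ)),
    Finset.sum_ite_eq' Finset.univ v (fun _ => (1:ℝ))]
  simp

lemma aux_pair_dot_self {u v : Fin n} (hne : u ≠ v) :
    (fun i => (if i = u then (1:ℝ) else 0) - (if i = v then 1 else 0)) ⬝ᵥ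
    (fun i => (if i = u then (1:ℝ) else 0) - (if i = v then 1 else 0)) = 2 := by
  classical
  rw [dotProduct]
  have key : ∀ i : Fin n, ((if i = u then (1:ℝ) else 0) - (if i = v then 1 else 0)) *
      ((if i = u then (1:ℝ) else 0) - (if i = v then 1 else 0))
      = (if i = u then (1:ℝ) else 0) + (if i = v then 1 else 0) := by
    intro i
    by_cases h1 : i = u
    · rw [if_pos h1, if_neg (fun h => hne (h1.symm.trans h))]; ring
    · rw [if_neg h1]
      by_cases h2 : i = v
      · rw [if_pos h2]; ring
      · rw [if_neg h2]; ring
  rw [Finset.sum_congr rfl fun i _ => key i, Finset.sum_add_distrib,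
    Finset.sum_ite_eq' Finset.univ u (fun _ => (1:ℝ)),
    Finset.sum_ite_eq' Finset.univ v (fun _ => (1:ℝ))]
  simp
  norm_num

/-! ### A non-adjacent pair with small degree sum -/

lemma aux_exists_pair (hn : 0 < n) (G : SimpleGraph (Fin n)) (hG : G ≠ ⊤) :
    ∃ u v, u ≠ v ∧ ¬G.Adj u v ∧
      ((G.degree u : ℝ) + G.degree v) ≤ 4 * (G.edgeFinset.card : ℝ) / n := by
  classical
  set n' : ℝ := (n : ℝ) with hn'
  have hn0 : (0:ℝ) < n' := by rw [hn']; exact_mod_cast hn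
  set m' : ℝ := (G.edgeFinset.card : ℝ) with hm'
  set c : ℝ := 4 * m' / n' with hc
  set d : Fin n → ℝ := fun u => (G.degree u : ℝ) with hdd
  have hd2m : ∑ u, d u = 2 * m' := by
    have h := SimpleGraph.sum_degrees_eq_twice_card_edges G
    rw [hdd, hm']
    show ∑ u, (G.degree u : ℝ) = 2 * (G.edgeFinset.card : ℝ)
    exact_mod_cast congrArg (Nat.cast : ℕ → ℝ) h
  obtain ⟨u₀, v₀, huv₀, hnadj₀⟩ : ∃ u v, u ≠ v ∧ ¬G.Adj u v := by
    by_contra hcon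
    push_neg at hcon
    apply hG
    ext u v
    exact ⟨fun h => h.ne, fun h => hcon u v h⟩
  by_contra hcon
  push_neg at hcon
  set f : Fin n → Fin n → ℝ :=
    fun u v => if u ≠ v ∧ ¬G.Adj u v then d u + d v - c else 0 with hf
  have hf0 : ∀ u v, 0 ≤ f u v := by
    intro u v
    rw [hf]; dsimp only
    split_ifs with h
    · have := hcon u v h.1 h.2
      linarith
    · exact le_rfl
  have hfpos : 0 < f u₀ v₀ := by
    rw [hf]; dsimp only
    rw [if_pos ⟨huv₀, hnadj₀⟩]
    have := hcon u₀ v₀ huv₀ hnadj₀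
    linarith
  have hsumpos : 0 < ∑ u, ∑ v, f u v := by
    apply Finset.sum_pos' (fun u _ => Finset.sum_nonneg fun v _ => hf0 u v)
    exact ⟨u₀, Finset.mem_univ _,
      Finset.sum_pos' (fun v _ => hf0 u₀ v) ⟨v₀, Finset.mem_univ _, hfpos⟩⟩
  have hsplit : ∀ u v, f u v = (d u + d v - c) - (if v = u then d u + d v - c else 0)
      - (if G.Adj u v then d u + d v - c else 0) := by
    intro u v
    rw [hf]; dsimp only
    by_cases h1 : v = u
    · subst h1
      rw [if_neg (by tauto), if_pos rfl, if_neg (G.irrefl)]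
      ring
    · by_cases h2 : G.Adj u v
      · rw [if_neg (by tauto), if_neg h1, if_pos h2]; ring
      · rw [if_pos ⟨fun h => h1 h.symm, h2⟩, if_neg h1, if_neg h2]; ring
  set W : Fin n → ℝ := fun u => ∑ v, if G.Adj u v then d v else 0 with hW
  have hdeg : ∀ u, (∑ v, if G.Adj u v then (1:ℝ) else 0) = d u :=
    fun u => (G.degree_eq_sum_if_adj u).symm
  have hconst : ∀ r : ℝ, (∑ _v : Fin n, r) = n' * r := by
    intro r
    rw [Finset.sum_const, Finset.card_univ, Fintype.card_fin, nsmul_eq_mul, hn']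
  have hrow : ∀ u, ∑ v, f u v
      = (n' * d u + 2*m' - n'*c) - (2*d u - c) - (d u * (d u - c) + W u) := by
    intro u
    have e1 : ∑ v, (d u + d v - c) = n' * d u + 2*m' - n'*c := by
      rw [Finset.sum_sub_distrib, Finset.sum_add_distrib, hd2m, hconst, hconst]
    have e2 : ∑ v, (if v = u then d u + d v - c else 0) = 2*d u - c := by
      rw [Finset.sum_ite_eq' Finset.univ u (fun v => d u + d v - c)]
      rw [if_pos (Finset.mem_univ u)]
      ring
    have e3 : ∑ v, (if G.Adj u v then (d u + d v - c) else 0) = d u * (d u - c) + W u := by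
      have key : ∀ v, (if G.Adj u v then (d u + d v - c) else 0)
          = (d u - c) * (if G.Adj u v then (1:ℝ) else 0) + (if G.Adj u v then d v else 0) := by
        intro v; split_ifs <;> ring
      rw [Finset.sum_congr rfl (fun v _ => key v), Finset.sum_add_distrib,
        ← Finset.mul_sum, hdeg]
      rw [hW]; ring
    rw [Finset.sum_congr rfl (fun v _ => hsplit u v),
      Finset.sum_sub_distrib, Finset.sum_sub_distrib, e1, e2, e3]
  have hWsum : ∑ u, W u = ∑ v, d v * d v := by
    simp only [hW]
    rw [Finset.sum_comm]
    apply Finset.sum_congr rfl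
    intro v _
    have key : ∀ u, (if G.Adj u v then d v else 0) = d v * (if G.Adj v u then (1:ℝ) else 0) := by
      intro u; rw [G.adj_comm]; split_ifs <;> ring
    rw [Finset.sum_congr rfl fun u _ => key u, ← Finset.mul_sum, hdeg]
  set SD : ℝ := ∑ u, d u * d u with hSD
  have htot : ∑ u, ∑ v, f u v
      = (n'*(2*m') + n'*(2*m') - n'*(n'*c)) - (2*(2*m') - n'*c) - (SD - 2*m'*c + SD) := by
    rw [Finset.sum_congr rfl (fun u _ => hrow u),
      Finset.sum_sub_distrib, Finset.sum_sub_distrib, Finset.sum_add_distrib, hWsum]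
    have s1 : ∑ u, (n' * d u + 2*m' - n'*c) = n'*(2*m') + n'*(2*m') - n'*(n'*c) := by
      rw [Finset.sum_sub_distrib, Finset.sum_add_distrib, ← Finset.mul_sum, hd2m,
        hconst, hconst]
    have s2 : ∑ u, (2*d u - c) = 2*(2*m') - n'*c := by
      rw [Finset.sum_sub_distrib, ← Finset.mul_sum, hd2m, hconst]
    have s3 : ∑ u, d u * (d u - c) = SD - 2*m'*c := by
      have key : ∀ u, d u * (d u - c) = d u * d u - c * d u := by intro u; ring
      rw [Finset.sum_congr rfl fun u _ => key u, Finset.sum_sub_distrib,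
        ← Finset.mul_sum, hd2m, hSD]
      ring
    rw [s1, s2, s3, hSD]
  have hCS : 4*m'*m' ≤ n' * SD := by
    have := sq_sum_le_card_mul_sum_sq (s := (Finset.univ : Finset (Fin n))) (f := d)
    rw [hd2m] at this
    have h2 : ((Finset.univ : Finset (Fin n)).card : ℝ) = n' := by
      rw [Finset.card_univ, Fintype.card_fin, hn']
    calc 4*m'*m' = (2*m')^2 := by ring
      _ ≤ (Finset.univ.card : ℝ) * ∑ u, d u ^ 2 := by exact_mod_cast this
      _ = n' * SD := by
          rw [h2, hSD]; congr 1; exact Finset.sum_congr rfl fun u _ => pow_two (d u)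
  have hnc : n' * c = 4 * m' := by
    rw [hc]; field_simp
  have hle : ∑ u, ∑ v, f u v ≤ 0 := by
    rw [htot]
    have h8 : n' * (2*m'*c) = 8*m'*m' := by
      rw [hc]; field_simp; ring
    have key : 2*m'*c ≤ 2*SD := by
      have h1 : n' * (2*m'*c) ≤ n' * (2*SD) := by rw [h8]; linarith [hCS]
      exact le_of_mul_le_mul_left h1 hn0
    have hA : n' * (n' * c) = n' * (4 * m') := by rw [hnc]
    linarith [key, hA]
  linarith

/-! ### Sorting machinery -/

noncomputable def sortPerm (f : Fin n → ℝ) : Equiv.Perm (Fin n) :=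
  Fin.revPerm.trans (Tuple.sort f)

lemma sortDesc_eq_comp (f : Fin n → ℝ) (i : Fin n) : sortDesc f i = f (sortPerm f i) := rfl

lemma sortDesc_anti (f : Fin n → ℝ) : Antitone (sortDesc f) := by
  intro i j hij
  exact Tuple.monotone_sort f (Fin.rev_le_rev.mpr hij)

lemma sortDesc_sum (f : Fin n → ℝ) : ∑ i, sortDesc f i = ∑ i, f i :=
  Equiv.sum_comp (sortPerm f) f

lemma sortDesc_filter_card (f : Fin n → ℝ) (p : ℝ → Prop) :
    #(Finset.univ.filter fun i => p (f i)) = #(Finset.univ.filter fun i => p (sortDesc f i)) := by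
  classical
  symm
  apply Finset.card_bij (fun i _ => sortPerm f i)
  · intro a ha
    simp only [Finset.mem_filter] at *
    exact ⟨Finset.mem_univ _, by rw [← sortDesc_eq_comp f a]; exact ha.2⟩
  · intro a _ b _ hab
    exact (sortPerm f).injective hab
  · intro b hb
    refine ⟨(sortPerm f).symm b, ?_, by simp⟩
    simp only [Finset.mem_filter] at *
    refine ⟨Finset.mem_univ _, ?_⟩
    rw [sortDesc_eq_comp f, Equiv.apply_symm_apply]
    exact hb.2

end Auxiliary

/-- Let `G ≠ Kₙ` be a simple graph on `n` vertices with `m ≥ 1` edges, and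
`k ≥ 2`. If `m ≥ n²/4`, then `‖LI(G)‖_{F_k} ≤ 2m/n + (k-1)·spr(L(G))`, where
`spr(L(G)) = μ₁(G) - μₙ₋₁(G)`. -/
theorem stmt_11 {n : ℕ} (hn : 0 < n) (G : SimpleGraph (Fin n)) (hG : G ≠ ⊤)
    (hm : 1 ≤ numEdges G) (k : ℕ) (hk : 2 ≤ k)
    (h : (n : ℝ) ^ 2 / 4 ≤ (numEdges G : ℝ)) :
    kyFanLI G k ≤ 2 * (numEdges G : ℝ) / n +
      ((k : ℝ) - 1) * (lapEig G ⟨0, hn⟩ - lapEig G ⟨n - 2, by omega⟩) := by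
  classical
  have hL := SimpleGraph.posSemidef_lapMatrix ℝ G
  have hA : (G.lapMatrix ℝ).IsHermitian := hL.isHermitian
  have hlap : lapEig G = sortDesc hA.eigenvalues := rfl
  have hn2 : 2 ≤ n := by
    have hedge : ∃ u v : Fin n, G.Adj u v := by
      have hne : G.edgeFinset.Nonempty := Finset.card_pos.mp hm
      obtain ⟨e, he⟩ := hne
      rw [SimpleGraph.mem_edgeFinset] at he
      induction e using Sym2.ind with
      | _ u v => exact ⟨u, v, he⟩
    obtain ⟨u, v, huv⟩ := hedge
    have hne' : u ≠ v := G.ne_of_adj huv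
    by_contra hlt
    push_neg at hlt
    have h1 := u.isLt
    have h2 := v.isLt
    exact hne' (Fin.ext (by omega))
  have hn0 : (0:ℝ) < n := by exact_mod_cast hn
  have hpsd : ∀ i, 0 ≤ hA.eigenvalues i := fun i => hL.eigenvalues_nonneg i
  have hub : ∀ i, hA.eigenvalues i ≤ (n:ℝ) := aux_eig_le_of_quad hA (n:ℝ) (aux_lap_quad_le G)
  have hnumr : (numEdges G : ℝ) = (G.edgeFinset.card : ℝ) := rfl
  have htr : ∑ i, hA.eigenvalues i = 2 * (numEdges G : ℝ) := by
    rw [aux_trace_eq hA, aux_lap_trace G, hnumr]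
  set a : ℝ := 2 * (numEdges G : ℝ) / n with ha
  set idx0 : Fin n := ⟨0, hn⟩ with hidx0
  set idx2 : Fin n := ⟨n-2, by omega⟩ with hidx2
  set lastIdx : Fin n := ⟨n-1, by omega⟩ with hlastIdx
  set s : ℝ := lapEig G idx0 - lapEig G idx2 with hs
  -- the largest eigenvalue dominates all others
  have hmax : ∀ i, lapEig G i ≤ lapEig G idx0 := by
    intro i
    rw [hlap]
    exact sortDesc_anti hA.eigenvalues (by rw [Fin.le_def]; exact Nat.zero_le _)
  -- a ≤ μ₁
  have hF5 : a ≤ lapEig G idx0 := by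
    have h1 : ∑ i, lapEig G i = 2 * (numEdges G:ℝ) := by rw [hlap, sortDesc_sum]; exact htr
    have h2 : ∑ i, lapEig G i ≤ ∑ _i : Fin n, lapEig G idx0 :=
      Finset.sum_le_sum fun i _ => hmax i
    rw [Finset.sum_const, Finset.card_univ, Fintype.card_fin, nsmul_eq_mul] at h2
    rw [ha, div_le_iff₀ hn0]
    nlinarith [h1, h2]
  -- at most one eigenvalue below μ_{n-1}
  have hcard : #(Finset.univ.filter fun i => hA.eigenvalues i < lapEig G idx2) ≤ 1 := by
    have hfc := sortDesc_filter_card hA.eigenvalues (fun t => t < lapEig G idx2)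
    have hsub : (Finset.univ.filter fun i => sortDesc hA.eigenvalues i < lapEig G idx2)
        ⊆ {lastIdx} := by
      intro i hi
      simp only [Finset.mem_filter] at hi
      rw [Finset.mem_singleton]
      by_contra hnei
      have hile : i ≤ idx2 := by
        have h1 : (i:ℕ) ≠ n - 1 := fun hc => hnei (Fin.ext hc)
        have h2 := i.isLt
        rw [Fin.le_def]
        show (i:ℕ) ≤ n - 2
        omega
      have hanti := sortDesc_anti hA.eigenvalues hile
      have hrw : lapEig G idx2 = sortDesc hA.eigenvalues idx2 := by rw [hlap]
      rw [hrw] at hi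
      linarith [hi.2]
    have hfin : #(Finset.univ.filter fun i => sortDesc hA.eigenvalues i < lapEig G idx2) ≤ 1 := by
      calc _ ≤ ({lastIdx} : Finset (Fin n)).card := Finset.card_le_card hsub
        _ = 1 := Finset.card_singleton _
    exact le_of_eq_of_le hfc hfin
  -- Fiedler-type bound : μ_{n-1} ≤ a
  obtain ⟨u, v, huvne, hnadj, hdegsum⟩ := aux_exists_pair hn G hG
  have hz : Matrix.mulVec (G.lapMatrix ℝ) (fun _ => (1:ℝ)) = 0 :=
    G.lapMatrix_mulVec_const_eq_zero
  have hz0 : (fun _ : Fin n => (1:ℝ)) ≠ 0 := by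
    intro hc
    have := congrFun hc ⟨0, hn⟩
    norm_num at this
  have h2nd := aux_rayleigh_second hA hpsd (lapEig G idx2) hcard (fun _ => (1:ℝ))
    (fun i => (if i = u then (1:ℝ) else 0) - (if i = v then 1 else 0)) hz hz0
    (aux_ones_dot_pair huvne)
  rw [aux_pair_dot_self huvne, aux_lap_quad_pair G huvne hnadj] at h2nd
  have hF4 : lapEig G idx2 ≤ a := by
    have h4 : 4 * ((G.edgeFinset.card : ℝ)) / (n:ℝ) = 2 * a := by
      rw [ha, hnumr]; ring
    linarith [h2nd, hdegsum]
  -- n ≤ 2a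
  have hF6 : (n:ℝ) ≤ 2*a := by
    rw [ha, show (2:ℝ)*(2*(numEdges G:ℝ)/n) = 4*(numEdges G:ℝ)/n by ring, le_div_iff₀ hn0]
    nlinarith [h]
  -- pointwise bounds on singular values
  have hP1 : ∀ j, |lapEig G j - a| ≤ a := by
    intro j
    have h1 : 0 ≤ lapEig G j := by rw [hlap, sortDesc_eq_comp]; exact hpsd _
    have h2 : lapEig G j ≤ (n:ℝ) := by rw [hlap, sortDesc_eq_comp]; exact hub _
    rw [abs_le]
    constructor <;> linarith
  have hP3 : 0 ≤ s := by
    have hle : idx0 ≤ idx2 := by rw [Fin.le_def]; exact Nat.zero_le _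
    have := sortDesc_anti hA.eigenvalues hle
    have hr0 : lapEig G idx0 = sortDesc hA.eigenvalues idx0 := by rw [hlap]
    have hr2 : lapEig G idx2 = sortDesc hA.eigenvalues idx2 := by rw [hlap]
    rw [hs, hr0, hr2]
    linarith
  have hP2 : ∀ j : Fin n, j ≠ lastIdx → |lapEig G j - a| ≤ s := by
    intro j hj
    have hjle : j ≤ idx2 := by
      have h1 : (j:ℕ) ≠ n - 1 := fun hc => hj (Fin.ext hc)
      have h2 := j.isLt
      rw [Fin.le_def]
      show (j:ℕ) ≤ n - 2
      omega
    have h1 : lapEig G idx2 ≤ lapEig G j := by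
      rw [hlap]; exact sortDesc_anti hA.eigenvalues hjle
    have h2 : lapEig G j ≤ lapEig G idx0 := hmax j
    rw [hs, abs_le]
    constructor <;> linarith
  -- assemble the sum
  set F := Finset.univ.filter (fun i : Fin n => (i:ℕ) < k) with hF
  set vf : Fin n → ℝ := fun i => |lapEig G i - 2 * numEdges G / n| with hvf
  set e := sortPerm vf with he
  have hky : ∀ i, LIsv G i = vf (e i) := fun i => rfl
  have hcardF : F.card ≤ k := by
    have h1 : F.card ≤ (Finset.range k).card :=
      Finset.card_le_card_of_injOn (fun i => (i:ℕ))
        (by intro i hi; rw [hF] at hi; simp at hi ⊢; exact hi)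
        (fun x _ y _ hxy => Fin.ext hxy)
    simpa using h1
  have h0F : idx0 ∈ F := by
    rw [hF]
    simp only [Finset.mem_filter]
    exact ⟨Finset.mem_univ _, by simpa [hidx0] using (by omega : 0 < k)⟩
  set T := F.image ⇑e with hT
  have hTne : T.Nonempty := ⟨e idx0, Finset.mem_image_of_mem _ h0F⟩
  have hTcard : T.card ≤ k := le_trans Finset.card_image_le hcardF
  have hTpos : 0 < T.card := Finset.card_pos.mpr hTne
  have hkyeq : kyFanLI G k = ∑ j ∈ T, vf j := by
    have h1 : ∑ i ∈ F, LIsv G i = ∑ i ∈ F, vf (e i) :=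
      Finset.sum_congr rfl fun i _ => hky i
    have h2 : ∑ j ∈ T, vf j = ∑ i ∈ F, vf (e i) :=
      Finset.sum_image (fun x _ y _ hxy => e.injective hxy)
    exact h1.trans h2.symm
  obtain ⟨t, ht, htp⟩ : ∃ t ∈ T, ∀ j ∈ T, j ≠ t → j ≠ lastIdx := by
    by_cases hl : lastIdx ∈ T
    · exact ⟨lastIdx, hl, fun j _ hjt => hjt⟩
    · obtain ⟨t, ht⟩ := hTne
      exact ⟨t, ht, fun j hj _ hc => hl (by rw [← hc]; exact hj)⟩
  have hvft : vf t ≤ a := hP1 t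
  have herase : ∑ j ∈ T.erase t, vf j ≤ ((k:ℝ) - 1) * s := by
    have hptwise : ∀ j ∈ T.erase t, vf j ≤ s := fun j hj =>
      hP2 j (htp j (Finset.mem_of_mem_erase hj) (Finset.ne_of_mem_erase hj))
    calc ∑ j ∈ T.erase t, vf j ≤ ∑ _j ∈ T.erase t, s := Finset.sum_le_sum hptwise
      _ = ((T.erase t).card : ℝ) * s := by rw [Finset.sum_const, nsmul_eq_mul]
      _ = ((T.card - 1 : ℕ) : ℝ) * s := by rw [Finset.card_erase_of_mem ht]
      _ ≤ ((k:ℝ) - 1) * s := by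
          apply mul_le_mul_of_nonneg_right _ hP3
          have h1 : T.card - 1 ≤ k - 1 := by omega
          calc ((T.card - 1 : ℕ):ℝ) ≤ ((k - 1:ℕ):ℝ) := by exact_mod_cast h1
            _ = (k:ℝ) - 1 := by
                rw [Nat.cast_sub (by omega : 1 ≤ k)]
                norm_num
  have hsum1 : ∑ j ∈ T, vf j = vf t + ∑ j ∈ T.erase t, vf j :=
    (Finset.add_sum_erase T vf ht).symm
  show kyFanLI G k ≤ a + ((k:ℝ) - 1) * s
  rw [hkyeq, hsum1]
  linarith [hvft, herase]
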